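/- Let X ≥ 2 be an integer, let U be a real number with U ≥ X, and let t be any real number. Then X^U·(1 − X/(U+1)) ≤ |F_X(−U + it)| ≤ X^U·(1 + X/(U+1)); in particular F_X(−U + it) ≠ 0. -/

import Mathlib

/-- The partial sum of the Riemann zeta-function: `F_X(s) = ∑_{n ≤ X} n^{-s}`. -/
noncomputable def FX (X : ℝ) (s : ℂ) : ℂ :=
  ∑ n ∈ Finset.Icc 1 ⌊X⌋₊, (n : ℂ) ^ (-s)

theorem stmt_15 (X : ℕ) (hX : 2 ≤ X) (U : ℝ) (hU : (X : ℝ) ≤ U) (t : ℝ) :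
    (X : ℝ) ^ U * (1 - X / (U + 1)) ≤ ‖FX X (-U + t * Complex.I)‖ ∧
    ‖FX X (-U + t * Complex.I)‖ ≤ (X : ℝ) ^ U * (1 + X / (U + 1)) ∧
    FX X (-U + t * Complex.I) ≠ 0 := by
  have hX1 : (1:ℝ) ≤ (X:ℝ) := by exact_mod_cast Nat.one_le_of_lt hX
  have hU0 : (0:ℝ) ≤ U := le_trans (by positivity) hU
  have hU1 : (0:ℝ) < U + 1 := by linarith
  set s : ℂ := -U + t * Complex.I with hs
  have hres : (-s).re = U := by simp [hs]
  have habs : ∀ n : ℕ, 1 ≤ n → ‖(n:ℂ) ^ (-s)‖ = (n:ℝ) ^ U := by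
    intro n hn
    rw [show ((n:ℂ)) = (((n:ℝ)):ℂ) by push_cast; ring,
      Complex.norm_cpow_eq_rpow_re_of_pos (by exact_mod_cast hn), hres]
  -- bound on the sum over n < X
  have key : ∑ n ∈ Finset.Ico 1 X, (n:ℝ) ^ U ≤ (X:ℝ) ^ U * ((X:ℝ) / (U + 1)) := by
    have hmono : MonotoneOn (fun x : ℝ => x ^ U) (Set.Icc ((1:ℕ):ℝ) ((X:ℕ):ℝ)) := by
      intro a ha b hb hab
      exact Real.rpow_le_rpow (le_trans zero_le_one (by exact_mod_cast ha.1)) hab hU0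
    have h2 := MonotoneOn.sum_le_integral_Ico (f := fun x : ℝ => x ^ U)
      (a := 1) (b := X) (by omega) hmono
    have h3 : (∫ x in (1:ℝ)..(X:ℝ), x ^ U) = ((X:ℝ) ^ (U+1) - (1:ℝ) ^ (U+1)) / (U + 1) := by
      rw [integral_rpow (Or.inl (by linarith))]
    have h4 : (X:ℝ) ^ (U + 1) = (X:ℝ) ^ U * (X:ℝ) := by
      rw [Real.rpow_add (by linarith), Real.rpow_one]
    have h5 : ((X:ℝ) ^ (U+1) - (1:ℝ) ^ (U+1)) / (U + 1) ≤ (X:ℝ) ^ U * ((X:ℝ) / (U + 1)) := by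
      rw [Real.one_rpow, h4]
      rw [div_le_iff₀ hU1, mul_assoc, div_mul_cancel₀ _ (ne_of_gt hU1)]
      linarith
    calc ∑ n ∈ Finset.Ico 1 X, (n:ℝ) ^ U ≤ ∫ x in ((1:ℕ):ℝ)..((X:ℕ):ℝ), x ^ U := h2
      _ ≤ (X:ℝ) ^ U * ((X:ℝ) / (U + 1)) := by rw [Nat.cast_one]; rw [h3] at *; exact h5
  -- decompose FX
  have hsplit : FX X s = (∑ n ∈ Finset.Ico 1 X, (n:ℂ) ^ (-s)) + (X:ℂ) ^ (-s) := by
    rw [FX, Nat.floor_natCast, ← Finset.Ico_add_one_right_eq_Icc, Finset.sum_Ico_succ_top (by omega)]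
  have hT : ‖(X:ℂ) ^ (-s)‖ = (X:ℝ) ^ U := habs X (by omega)
  have hR : ‖∑ n ∈ Finset.Ico 1 X, (n:ℂ) ^ (-s)‖ ≤ (X:ℝ) ^ U * ((X:ℝ) / (U + 1)) := by
    refine le_trans (norm_sum_le _ _) ?_
    refine le_trans (le_of_eq (Finset.sum_congr rfl fun n hn => ?_)) key
    exact habs n (Finset.mem_Ico.mp hn).1
  have hA := hsplit ▸ (norm_add_le (∑ n ∈ Finset.Ico 1 X, (n:ℂ) ^ (-s)) ((X:ℂ) ^ (-s)))
  have hB : (X:ℝ) ^ U - (X:ℝ) ^ U * ((X:ℝ) / (U + 1)) ≤ ‖FX X s‖ := by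
    have h6 : ‖(X:ℂ) ^ (-s)‖ ≤
        ‖FX X s‖ + ‖∑ n ∈ Finset.Ico 1 X, (n:ℂ) ^ (-s)‖ := by
      have : (X:ℂ) ^ (-s) = FX X s - (∑ n ∈ Finset.Ico 1 X, (n:ℂ) ^ (-s)) := by
        rw [hsplit]; ring
      rw [this, sub_eq_add_neg]
      exact (norm_add_le _ _).trans (by rw [norm_neg])
    linarith [hT ▸ h6]
  have hlt : (X:ℝ) / (U + 1) < 1 := (div_lt_one hU1).mpr (by linarith)
  have hXU : (0:ℝ) < (X:ℝ) ^ U := Real.rpow_pos_of_pos (by linarith) U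
  refine ⟨by nlinarith, by nlinarith, ?_⟩
  intro h0
  rw [h0] at hB
  simp only [norm_zero] at hB
  nlinarith
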